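/- Under these hypotheses, the principal submatrix Y_LL is positive definite; the vector I_L^* := −Y_LS V_S is entrywise nonnegative and nonzero; and the vector V_L^* := Y_LL⁻¹ I_L^* has all entries positive. -/

import Mathlib

open Matrix Set

noncomputable section

/-- `A` is irreducible: for every nonempty proper subset `α` of the index set,
the submatrix `A[α, αᶜ]` is not the zero matrix. -/
def IsIrred {k : ℕ} (A : Matrix (Fin k) (Fin k) ℝ) : Prop :=
  ∀ α : Finset (Fin k), α.Nonempty → α ≠ Finset.univ → ∃ i ∈ α, ∃ j ∈ αᶜ, A i j ≠ 0

/-- `A` is a Z-matrix: off-diagonal entries are nonpositive. -/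
def IsZmat {k : ℕ} (A : Matrix (Fin k) (Fin k) ℝ) : Prop :=
  ∀ i j, i ≠ j → A i j ≤ 0

/-- `A` is an M-matrix: a Z-matrix all of whose eigenvalues have nonnegative real part. -/
def IsMmat {k : ℕ} (A : Matrix (Fin k) (Fin k) ℝ) : Prop :=
  IsZmat A ∧ ∀ μ ∈ spectrum ℂ (A.map (Complex.ofReal)), 0 ≤ μ.re

/-- `A` is a nonsingular M-matrix: a Z-matrix all of whose eigenvalues have positive real part. -/
def IsNonsingMmat {k : ℕ} (A : Matrix (Fin k) (Fin k) ℝ) : Prop :=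
  IsZmat A ∧ ∀ μ ∈ spectrum ℂ (A.map (Complex.ofReal)), 0 < μ.re

/-- `P_c(x) = [x] Y (V* − x)`. -/
def Pc {k : ℕ} (Y : Matrix (Fin k) (Fin k) ℝ) (Vs : Fin k → ℝ) (x : Fin k → ℝ) : Fin k → ℝ :=
  Matrix.diagonal x *ᵥ (Y *ᵥ (Vs - x))

/-- Jacobian of `P_c` at `x`: `J(x) = [Y(V* − x)] − [x] Y`. -/
def Jmat {k : ℕ} (Y : Matrix (Fin k) (Fin k) ℝ) (Vs : Fin k → ℝ) (x : Fin k → ℝ) :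
    Matrix (Fin k) (Fin k) ℝ :=
  Matrix.diagonal (Y *ᵥ (Vs - x)) - Matrix.diagonal x * Y

/-- long-term voltage stable operating points. -/
def Dset {k : ℕ} (Y : Matrix (Fin k) (Fin k) ℝ) (Vs : Fin k → ℝ) : Set (Fin k → ℝ) :=
  {x | (∀ i, 0 < x i) ∧ IsUnit (Jmat Y Vs x).det ∧ ∀ i j, (Jmat Y Vs x)⁻¹ i j < 0}

/-- feasible power demands. -/
def Fset {k : ℕ} (Y : Matrix (Fin k) (Fin k) ℝ) (Vs : Fin k → ℝ) : Set (Fin k → ℝ) :=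
  {P | ∃ x, (∀ i, 0 < x i) ∧ Pc Y Vs x = P}

/-- `h(λ) = (1/2)([λ] Y + Y [λ])`. -/
def hmat {k : ℕ} (Y : Matrix (Fin k) (Fin k) ℝ) (l : Fin k → ℝ) : Matrix (Fin k) (Fin k) ℝ :=
  (1/2 : ℝ) • (Matrix.diagonal l * Y + Y * Matrix.diagonal l)

/-- `Λ₁ = {λ ∈ Λ : λ > 0, 1ᵀλ = 1}`. -/
def Lam1 {k : ℕ} (Y : Matrix (Fin k) (Fin k) ℝ) : Set (Fin k → ℝ) :=
  {l | (hmat Y l).PosDef ∧ (∀ i, 0 < l i) ∧ ∑ i, l i = 1}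

/-- `φ(λ) = (1/2) h(λ)⁻¹ [λ] I*` where `I* = Y V*`. -/
def phiv {k : ℕ} (Y : Matrix (Fin k) (Fin k) ℝ) (Vs : Fin k → ℝ) (l : Fin k → ℝ) : Fin k → ℝ :=
  (1/2 : ℝ) • ((hmat Y l)⁻¹ *ᵥ (Matrix.diagonal l *ᵥ (Y *ᵥ Vs)))

/-- `‖x‖_{h(λ)}²  = xᵀ h(λ) x`. -/
def qnorm {k : ℕ} (Y : Matrix (Fin k) (Fin k) ℝ) (l x : Fin k → ℝ) : ℝ :=
  x ⬝ᵥ (hmat Y l *ᵥ x)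

/-- The half-space `H_λ`. -/
def Hset {k : ℕ} (Y : Matrix (Fin k) (Fin k) ℝ) (Vs : Fin k → ℝ) (l : Fin k → ℝ) :
    Set (Fin k → ℝ) :=
  {y | l ⬝ᵥ y ≤ qnorm Y l (phiv Y Vs l)}

/-- The load-load block `Y_LL` of `Y`. -/
def blockLL (n m : ℕ) (Y : Matrix (Fin (n + m)) (Fin (n + m)) ℝ) : Matrix (Fin n) (Fin n) ℝ :=
  Matrix.of fun i j => Y (Fin.castAdd m i) (Fin.castAdd m j)

/-- The load-source block `Y_LS` of `Y`. -/
def blockLS (n m : ℕ) (Y : Matrix (Fin (n + m)) (Fin (n + m)) ℝ) : Matrix (Fin n) (Fin m) ℝ :=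
  Matrix.of fun i j => Y (Fin.castAdd m i) (Fin.natAdd n j)

/-- Total dissipated power `R(V_L, V_S) = (V_L; V_S)ᵀ Y (V_L; V_S)`. -/
def Rdiss (n m : ℕ) (Y : Matrix (Fin (n + m)) (Fin (n + m)) ℝ)
    (VS : Fin m → ℝ) (x : Fin n → ℝ) : ℝ :=
  Fin.append x VS ⬝ᵥ (Y *ᵥ Fin.append x VS)

section Aux

variable {k : ℕ} (Y : Matrix (Fin k) (Fin k) ℝ)

lemma rowsum_zero (hrow : Y *ᵥ (fun _ => (1 : ℝ)) = 0) (i : Fin k) : ∑ j, Y i j = 0 := by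
  have := congrFun hrow i
  simpa [mulVec, dotProduct] using this

lemma quad_eq (hsym : Y.IsSymm) (hrow : Y *ᵥ (fun _ => (1 : ℝ)) = 0) (x : Fin k → ℝ) :
    x ⬝ᵥ (Y *ᵥ x) = (1/2) * ∑ i, ∑ j, (-Y i j) * (x i - x j)^2 := by
  have hrs := rowsum_zero Y hrow
  have hcs : ∀ j, ∑ i, Y i j = 0 := by
    intro j
    calc ∑ i, Y i j = ∑ i, Y j i := Finset.sum_congr rfl fun i _ => (hsym.apply i j).symm
      _ = 0 := hrs j
  have h1 : ∑ i, ∑ j, (-Y i j) * (x i - x j)^2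
      = ∑ i, ∑ j, ((-Y i j * x i^2) + (-Y i j * x j^2) + 2*(x i * (Y i j * x j))) := by
    refine Finset.sum_congr rfl fun i _ => Finset.sum_congr rfl fun j _ => ?_
    ring
  have hA : ∑ i : Fin k, ∑ j : Fin k, (-Y i j * x i^2) = 0 := by
    refine Finset.sum_eq_zero fun i _ => ?_
    rw [← Finset.sum_mul, Finset.sum_neg_distrib, hrs i]
    ring
  have hB : ∑ i : Fin k, ∑ j : Fin k, (-Y i j * x j^2) = 0 := by
    rw [Finset.sum_comm]
    refine Finset.sum_eq_zero fun j _ => ?_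
    rw [← Finset.sum_mul, Finset.sum_neg_distrib, hcs j]
    ring
  have hC : ∑ i : Fin k, ∑ j : Fin k, 2*(x i * (Y i j * x j)) = 2 * (x ⬝ᵥ (Y *ᵥ x)) := by
    simp [dotProduct, mulVec, Finset.mul_sum]
  rw [h1]
  simp only [Finset.sum_add_distrib]
  rw [hA, hB, hC]
  ring

lemma quad_term_nonneg (hZ : IsZmat Y) (x : Fin k → ℝ) (i j : Fin k) :
    0 ≤ (-Y i j) * (x i - x j)^2 := by
  rcases eq_or_ne i j with h | h
  · subst h; simp
  · exact mul_nonneg (by linarith [hZ i j h]) (sq_nonneg _)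

lemma quad_nonneg (hsym : Y.IsSymm) (hZ : IsZmat Y)
    (hrow : Y *ᵥ (fun _ => (1 : ℝ)) = 0) (x : Fin k → ℝ) :
    0 ≤ x ⬝ᵥ (Y *ᵥ x) := by
  rw [quad_eq Y hsym hrow x]
  have : 0 ≤ ∑ i : Fin k, ∑ j : Fin k, (-Y i j) * (x i - x j)^2 :=
    Finset.sum_nonneg fun i _ => Finset.sum_nonneg fun j _ => quad_term_nonneg Y hZ x i j
  linarith

lemma quad_zero (hsym : Y.IsSymm) (hZ : IsZmat Y)
    (hrow : Y *ᵥ (fun _ => (1 : ℝ)) = 0) (x : Fin k → ℝ)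
    (hx : x ⬝ᵥ (Y *ᵥ x) = 0) : ∀ i j, Y i j ≠ 0 → x i = x j := by
  have hsum : ∑ i : Fin k, ∑ j : Fin k, (-Y i j) * (x i - x j)^2 = 0 := by
    have := quad_eq Y hsym hrow x
    rw [hx] at this
    linarith
  have houter := (Finset.sum_eq_zero_iff_of_nonneg
    (fun i _ => Finset.sum_nonneg fun j _ => quad_term_nonneg Y hZ x i j)).mp hsum
  intro i j hY
  have hinner := (Finset.sum_eq_zero_iff_of_nonneg
    (fun j _ => quad_term_nonneg Y hZ x i j)).mp (houter i (Finset.mem_univ i)) j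
    (Finset.mem_univ j)
  rcases eq_or_ne i j with h | h
  · rw [h]
  · have hneg : -Y i j ≠ 0 := by simpa using hY
    have : (x i - x j)^2 = 0 := by
      rcases mul_eq_zero.mp hinner with h' | h'
      · exact absurd h' hneg
      · exact h'
    have := pow_eq_zero_iff (n := 2) (by norm_num) |>.mp this
    linarith

end Aux

section Main

variable (n m : ℕ)

lemma castAdd_ne_natAdd (i : Fin n) (j : Fin m) :
    Fin.castAdd m i ≠ Fin.natAdd n j := by
  intro h
  have := congrArg Fin.val h
  simp [Fin.castAdd, Fin.natAdd] at this
  omega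

lemma fin_split (j : Fin (n + m)) :
    (∃ i : Fin n, j = Fin.castAdd m i) ∨ (∃ i : Fin m, j = Fin.natAdd n i) := by
  rcases lt_or_ge j.val n with h | h
  · exact Or.inl ⟨⟨j.val, h⟩, Fin.ext rfl⟩
  · refine Or.inr ⟨⟨j.val - n, by omega⟩, Fin.ext ?_⟩
    simp [Fin.natAdd]
    omega

lemma append_dot (Y : Matrix (Fin (n + m)) (Fin (n + m)) ℝ) (x : Fin n → ℝ) :
    (Fin.append x (0 : Fin m → ℝ)) ⬝ᵥ (Y *ᵥ Fin.append x (0 : Fin m → ℝ))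
      = x ⬝ᵥ (blockLL n m Y *ᵥ x) := by
  simp only [dotProduct, mulVec, Fin.sum_univ_add, Fin.append_left, Fin.append_right,
    blockLL, Matrix.of_apply, Pi.zero_apply, zero_mul, mul_zero, Finset.sum_const_zero,
    add_zero]

theorem stmt_0_aux (hn : 1 ≤ n) (hm : 1 ≤ m)
    (Y : Matrix (Fin (n + m)) (Fin (n + m)) ℝ)
    (hsym : Y.IsSymm)
    (hZ : IsZmat Y)
    (hrow : Y *ᵥ (fun _ => (1 : ℝ)) = 0)
    (hirr : IsIrred Y)
    (VS : Fin m → ℝ) (hVS : ∀ i, 0 < VS i) :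
    (blockLL n m Y).PosDef ∧
    (∀ i, 0 ≤ (-(blockLS n m Y *ᵥ VS)) i) ∧
    (-(blockLS n m Y *ᵥ VS)) ≠ 0 ∧
    (∀ i, 0 < ((blockLL n m Y)⁻¹ *ᵥ (-(blockLS n m Y *ᵥ VS))) i) := by
  -- Part 1: PosDef
  have hpd : (blockLL n m Y).PosDef := by
    refine Matrix.PosDef.of_dotProduct_mulVec_pos ?_ ?_
    · -- Hermitian
      ext i j
      simp only [blockLL, conjTranspose_apply, Matrix.of_apply, star_trivial]
      exact hsym.apply _ _
    · intro x hx
      set z : Fin (n + m) → ℝ := Fin.append x (0 : Fin m → ℝ) with hz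
      have hq : x ⬝ᵥ (blockLL n m Y *ᵥ x) = z ⬝ᵥ (Y *ᵥ z) := (append_dot n m Y x).symm
      have hnonneg : 0 ≤ z ⬝ᵥ (Y *ᵥ z) := quad_nonneg Y hsym hZ hrow z
      have hne : z ⬝ᵥ (Y *ᵥ z) ≠ 0 := by
        intro h0
        have hconst := quad_zero Y hsym hZ hrow z h0
        -- α = set of indices where z = 0
        set α : Finset (Fin (n + m)) := Finset.univ.filter (fun i => z i = 0) with hα
        have hzsrc : ∀ j : Fin m, z (Fin.natAdd n j) = 0 := fun j => Fin.append_right x 0 j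
        have hαne : α.Nonempty := ⟨Fin.natAdd n ⟨0, hm⟩,
          Finset.mem_filter.mpr ⟨Finset.mem_univ _, hzsrc ⟨0, hm⟩⟩⟩
        have hαuniv : α = Finset.univ := by
          by_contra hne'
          obtain ⟨i, hi, j, hj, hYij⟩ := hirr α hαne hne'
          have hzi : z i = 0 := by simpa [hα] using hi
          have hzj : z j ≠ 0 := by
            intro h
            have : j ∈ α := by simp [hα, h]
            exact (Finset.mem_compl.mp hj) this
          exact hzj ((hconst i j hYij).symm.trans hzi)
        have hx0 : x = 0 := by
          funext i
          have : Fin.castAdd m i ∈ α := hαuniv ▸ Finset.mem_univ _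
          have := (Finset.mem_filter.mp this).2
          simpa [hz, Fin.append_left] using this
        exact hx hx0
      rw [star_trivial, hq]
      exact lt_of_le_of_ne hnonneg (Ne.symm hne)
  have hdet : IsUnit (blockLL n m Y).det := isUnit_iff_ne_zero.mpr (ne_of_gt hpd.det_pos)
  -- Part 2: nonnegativity
  have hLSneg : ∀ i j, blockLS n m Y i j ≤ 0 := fun i j =>
    hZ _ _ (castAdd_ne_natAdd n m i j)
  have hI_nonneg : ∀ i, 0 ≤ (-(blockLS n m Y *ᵥ VS)) i := by
    intro i
    simp only [Pi.neg_apply, mulVec, dotProduct, Left.nonneg_neg_iff]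
    exact Finset.sum_nonpos fun j _ => mul_nonpos_of_nonpos_of_nonneg (hLSneg i j) (hVS j).le
  -- Part 3: nonzero
  have hI_ne : (-(blockLS n m Y *ᵥ VS)) ≠ 0 := by
    set α : Finset (Fin (n + m)) := Finset.univ.filter
      (fun i => ∃ i' : Fin n, i = Fin.castAdd m i') with hα
    have hαne : α.Nonempty := ⟨Fin.castAdd m ⟨0, hn⟩,
      Finset.mem_filter.mpr ⟨Finset.mem_univ _, ⟨⟨0, hn⟩, rfl⟩⟩⟩
    have hαuniv : α ≠ Finset.univ := by
      intro h
      have : Fin.natAdd n ⟨0, hm⟩ ∈ α := h ▸ Finset.mem_univ _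
      obtain ⟨i', hi'⟩ := (Finset.mem_filter.mp this).2
      exact castAdd_ne_natAdd n m i' ⟨0, hm⟩ hi'.symm
    obtain ⟨i, hi, j, hj, hYij⟩ := hirr α hαne hαuniv
    obtain ⟨i', rfl⟩ := (Finset.mem_filter.mp hi).2
    have hj' : ∃ j' : Fin m, j = Fin.natAdd n j' := by
      rcases fin_split n m j with ⟨j'', rfl⟩ | h
      · exact absurd (by simp [hα]) (Finset.mem_compl.mp hj)
      · exact h
    obtain ⟨j', rfl⟩ := hj'
    have hterm : Y (Fin.castAdd m i') (Fin.natAdd n j') * VS j' < 0 :=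
      mul_neg_of_neg_of_pos
        (lt_of_le_of_ne (hLSneg i' j') hYij) (hVS j')
    have hsumlt : ∑ k, blockLS n m Y i' k * VS k < 0 := by
      have := Finset.sum_lt_sum (s := Finset.univ)
        (f := fun k => blockLS n m Y i' k * VS k) (g := fun _ => (0:ℝ))
        (fun k _ => mul_nonpos_of_nonpos_of_nonneg (hLSneg i' k) (hVS k).le)
        ⟨j', Finset.mem_univ j', hterm⟩
      simpa using this
    intro h0
    have := congrFun h0 i'
    simp only [Pi.neg_apply, Pi.zero_apply, mulVec, dotProduct, neg_eq_zero] at this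
    rw [this] at hsumlt
    exact lt_irrefl 0 hsumlt
  -- Part 4: positivity of V_L
  refine ⟨hpd, hI_nonneg, hI_ne, ?_⟩
  set IL : Fin n → ℝ := -(blockLS n m Y *ᵥ VS) with hIL
  set VL : Fin n → ℝ := (blockLL n m Y)⁻¹ *ᵥ IL with hVL
  have hsolve : blockLL n m Y *ᵥ VL = IL := by
    rw [hVL, mulVec_mulVec, Matrix.mul_nonsing_inv _ hdet, one_mulVec]
  set z : Fin (n + m) → ℝ := Fin.append VL VS with hz
  have hbal : ∀ i : Fin n, (Y *ᵥ z) (Fin.castAdd m i) = 0 := by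
    intro i
    have : (Y *ᵥ z) (Fin.castAdd m i)
        = (blockLL n m Y *ᵥ VL) i + (blockLS n m Y *ᵥ VS) i := by
      simp only [mulVec, dotProduct, hz, Fin.sum_univ_add, Fin.append_left,
        Fin.append_right, blockLL, blockLS, Matrix.of_apply]
    rw [this, hsolve, hIL]
    simp
  have hne' : Nonempty (Fin (n + m)) := ⟨⟨0, by omega⟩⟩
  obtain ⟨i0, -, hmin⟩ := Finset.exists_min_image Finset.univ z
    ⟨Classical.arbitrary _, Finset.mem_univ _⟩
  set c := z i0 with hc
  have hmin' : ∀ i, c ≤ z i := fun i => hmin i (Finset.mem_univ i)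
  have hcpos : 0 < c := by
    by_contra hcle
    push_neg at hcle
    set α : Finset (Fin (n + m)) := Finset.univ.filter (fun i => z i = c) with hα
    have hαne : α.Nonempty := ⟨i0, by simp [hα, hc]⟩
    have hzsrc : ∀ j : Fin m, z (Fin.natAdd n j) = VS j := fun j => Fin.append_right VL VS j
    have hαuniv : α ≠ Finset.univ := by
      intro h
      have : Fin.natAdd n ⟨0, hm⟩ ∈ α := h ▸ Finset.mem_univ _
      have := (Finset.mem_filter.mp this).2
      rw [hzsrc ⟨0, hm⟩] at this
      linarith [hVS ⟨0, hm⟩]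
    obtain ⟨i, hi, j, hj, hYij⟩ := hirr α hαne hαuniv
    have hzi : z i = c := (Finset.mem_filter.mp hi).2
    have hiload : ∃ i' : Fin n, i = Fin.castAdd m i' := by
      rcases fin_split n m i with h | ⟨i'', rfl⟩
      · exact h
      · rw [hzsrc i''] at hzi
        exact absurd hzi (by linarith [hVS i''])
    obtain ⟨i', rfl⟩ := hiload
    have hsum0 : ∑ j', Y (Fin.castAdd m i') j' * (z j' - c) = 0 := by
      have h1 : ∑ j', Y (Fin.castAdd m i') j' * z j' = 0 := hbal i'
      have h2 : ∑ j', Y (Fin.castAdd m i') j' = 0 := rowsum_zero Y hrow _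
      calc ∑ j', Y (Fin.castAdd m i') j' * (z j' - c)
          = ∑ j', Y (Fin.castAdd m i') j' * z j'
            - (∑ j', Y (Fin.castAdd m i') j') * c := by
            rw [Finset.sum_mul, ← Finset.sum_sub_distrib]
            exact Finset.sum_congr rfl fun j' _ => by ring
        _ = 0 := by rw [h1, h2]; ring
    have hterms : ∀ j' ∈ Finset.univ, Y (Fin.castAdd m i') j' * (z j' - c) ≤ 0 := by
      intro j' _
      rcases eq_or_ne (Fin.castAdd m i') j' with h | h
      · rw [← h, hzi]; simp
      · exact mul_nonpos_of_nonpos_of_nonneg (hZ _ _ h) (by linarith [hmin' j'])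
    have hall := (Finset.sum_eq_zero_iff_of_nonpos hterms).mp hsum0 j (Finset.mem_univ j)
    have hzj : z j = c := by
      rcases mul_eq_zero.mp hall with h | h
      · exact absurd h hYij
      · linarith
    exact (Finset.mem_compl.mp hj) (by simp [hα, hzj])
  intro i
  have : VL i = z (Fin.castAdd m i) := (Fin.append_left VL VS i).symm
  rw [← hVL] at *
  calc (0:ℝ) < c := hcpos
    _ ≤ z (Fin.castAdd m i) := hmin' _
    _ = VL i := Fin.append_left VL VS i

end Main

theorem stmt_0 (n m : ℕ) (hn : 1 ≤ n) (hm : 1 ≤ m)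
    (Y : Matrix (Fin (n + m)) (Fin (n + m)) ℝ)
    (hsym : Y.IsSymm)
    (hZ : IsZmat Y)
    (hrow : Y *ᵥ (fun _ => (1 : ℝ)) = 0)
    (hirr : IsIrred Y)
    (VS : Fin m → ℝ) (hVS : ∀ i, 0 < VS i) :
    (blockLL n m Y).PosDef ∧
    (∀ i, 0 ≤ (-(blockLS n m Y *ᵥ VS)) i) ∧
    (-(blockLS n m Y *ᵥ VS)) ≠ 0 ∧
    (∀ i, 0 < ((blockLL n m Y)⁻¹ *ᵥ (-(blockLS n m Y *ᵥ VS))) i) := by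
  exact stmt_0_aux n m hn hm Y hsym hZ hrow hirr VS hVS
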